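/- Every MVR chain graph is an ancestral graph; that is, if G is a mixed graph containing only directed and bidirected edges and having no partially directed cycle, then for all vertices α and β of G, if α and β are joined by an edge with an arrowhead at α (i.e., α ↔ β or β → α is an edge of G), then α is not anterior to β (equivalently, since G has no undirected edges, α is not an ancestor of β: α ≠ β and there is no directed path from α to β). -/

import Mathlib

open scoped Classical

universe u

variable {V : Type u}

/-- A mixed graph: a set of directed edges and a set of bidirected edges on `V`. -/
structure MixedGraph (V : Type u) where
  /-- `dir u v` means there is a directed edge `u → v`. -/
  dir : V → V → Prop
  /-- `bi u v` means there is a bidirected edge `u ↔ v`. -/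
  bi : V → V → Prop

namespace MixedGraph

/-- The basic well-formedness conditions of a mixed graph with only directed and
bidirected edges: `bi` is symmetric and irreflexive, `dir` is irreflexive, there are no
self-loops and at most one edge between each pair of distinct vertices. -/
def IsMixed (G : MixedGraph V) : Prop :=
  (∀ u v, G.bi u v → G.bi v u) ∧
  (∀ v, ¬ G.bi v v) ∧
  (∀ v, ¬ G.dir v v) ∧
  (∀ u v, G.dir u v → ¬ G.bi u v) ∧
  (∀ u v, G.dir u v → ¬ G.dir v u)

/-- A partially directed cycle: vertices `f 0, f 1, …, f n = f 0` (`n ≥ 2`,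
`f 0, …, f (n-1)` distinct) such that every step is a directed edge `f i → f (i+1)` or a
bidirected edge, and at least one step is directed. -/
def HasPDCycle (G : MixedGraph V) : Prop :=
  ∃ (n : ℕ) (f : ℕ → V), 2 ≤ n ∧ f n = f 0 ∧
    (∀ i j, i < n → j < n → f i = f j → i = j) ∧
    (∀ i, i < n → G.dir (f i) (f (i + 1)) ∨ G.bi (f i) (f (i + 1))) ∧
    (∃ i, i < n ∧ G.dir (f i) (f (i + 1)))

/-- An MVR chain graph: a mixed graph containing only directed and bidirected edges and
having no partially directed cycle. -/
def IsMVR (G : MixedGraph V) : Prop := G.IsMixed ∧ ¬ G.HasPDCycle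

/-- `G.anc u v` : `u` is an ancestor of `v` (`u = v` or there is a directed path
`u → ⋯ → v`). -/
def anc (G : MixedGraph V) (u v : V) : Prop := Relation.ReflTransGen G.dir u v

/-- `an(S)`: the set of ancestors of members of `S`. -/
def ancSet (G : MixedGraph V) (S : Set V) : Set V := {u | ∃ s ∈ S, G.anc u s}

/-- The descendants of `v`. -/
def de (G : MixedGraph V) (v : V) : Set V := {u | G.anc v u}

/-- The non-descendants of `v` : `V \ (de(v) ∪ {v})`. -/
def nd (G : MixedGraph V) (v : V) : Set V := {u | ¬ G.anc v u}

/-- Adjacency: some edge joins `u` and `v`. -/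
def adj (G : MixedGraph V) (u v : V) : Prop := G.dir u v ∨ G.dir v u ∨ G.bi u v

/-- `f 0, …, f n` is a walk: consecutive vertices are joined by some edge. -/
def IsWalk (G : MixedGraph V) (n : ℕ) (f : ℕ → V) : Prop :=
  ∀ i, i < n → G.adj (f i) (f (i + 1))

/-- `f 0, …, f n` is a path: a walk with distinct vertices. -/
def IsPath (G : MixedGraph V) (n : ℕ) (f : ℕ → V) : Prop :=
  G.IsWalk n f ∧ ∀ i j, i ≤ n → j ≤ n → f i = f j → i = j

/-- The nonendpoint vertex `f i` (`0 < i < n`) of a path is a collider: both incident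
edges of the path have an arrowhead at `f i`, i.e. the edge from `f (i-1)` is
`f (i-1) → f i` or `f (i-1) ↔ f i`, and the edge to `f (i+1)` is `f i ← f (i+1)` or
`f i ↔ f (i+1)`. -/
def IsColliderAt (G : MixedGraph V) (f : ℕ → V) (i : ℕ) : Prop :=
  (G.dir (f (i - 1)) (f i) ∨ G.bi (f (i - 1)) (f i)) ∧
  (G.dir (f (i + 1)) (f i) ∨ G.bi (f i) (f (i + 1)))

/-- A path between `α` and `β` is m-connecting given `Z` if every noncollider on it is
not in `Z` and every collider on it is in `an(Z)`. -/
def MConnecting (G : MixedGraph V) (Z : Set V) (α β : V) : Prop :=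
  ∃ (n : ℕ) (f : ℕ → V), G.IsPath n f ∧ f 0 = α ∧ f n = β ∧
    ∀ i, 0 < i → i < n →
      (G.IsColliderAt f i → f i ∈ G.ancSet Z) ∧ (¬ G.IsColliderAt f i → f i ∉ Z)

/-- `X` and `Y` are m-separated given `Z`: no m-connecting path given `Z` joins a vertex
of `X` to a vertex of `Y`. -/
def MSep (G : MixedGraph V) (X Y Z : Set V) : Prop :=
  ∀ α ∈ X, ∀ β ∈ Y, ¬ G.MConnecting Z α β

/-- The induced subgraph of `G` on the vertex set `A` (kept on the same vertex type:
only edges with both endpoints in `A` remain). -/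
def induce (G : MixedGraph V) (A : Set V) : MixedGraph V where
  dir u v := u ∈ A ∧ v ∈ A ∧ G.dir u v
  bi u v := u ∈ A ∧ v ∈ A ∧ G.bi u v

/-- Two vertices are collider connected if joined by a path on which every nonendpoint
vertex is a collider (a single edge counts). -/
def ColliderConnected (G : MixedGraph V) (x y : V) : Prop :=
  ∃ (n : ℕ) (f : ℕ → V), 1 ≤ n ∧ G.IsPath n f ∧ f 0 = x ∧ f n = y ∧
    ∀ i, 0 < i → i < n → G.IsColliderAt f i

end MixedGraph

/-- `Z` separates `X` from `Y` in the undirected graph with adjacency `E` : every path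
from `X` to `Y` meets `Z`. -/
def UndirSep {V : Type u} (E : V → V → Prop) (X Y Z : Set V) : Prop :=
  ∀ (n : ℕ) (f : ℕ → V), (∀ i, i < n → E (f i) (f (i + 1))) →
    (∀ i j, i ≤ n → j ≤ n → f i = f j → i = j) →
    f 0 ∈ X → f n ∈ Y → ∃ i, i ≤ n ∧ f i ∈ Z

namespace MixedGraph

/-- Augmented-graph separation (m*-separation): `Z` separates `X` from `Y` in the
augmented graph (whose edges join the collider-connected pairs) of the induced subgraph
of `G` on `an(X ∪ Y ∪ Z)`. -/
def AugSep (G : MixedGraph V) (X Y Z : Set V) : Prop :=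
  UndirSep (fun a b => (G.induce (G.ancSet (X ∪ Y ∪ Z))).ColliderConnected a b) X Y Z

/-- Connectivity in the bidirected part of `G`. -/
def biConn (G : MixedGraph V) (u v : V) : Prop := Relation.ReflTransGen G.bi u v

/-- The chain component of `v`: the connected component of `v` in the bidirected part. -/
def chainComp (G : MixedGraph V) (v : V) : Set V := {u | G.biConn v u}

/-- `T` is a chain component of `G`. -/
def IsChainComp (G : MixedGraph V) (T : Set V) : Prop := ∃ v, T = G.chainComp v

/-- The parents of a vertex: `pa_G(v) = {w : w → v}`. -/
def pa (G : MixedGraph V) (v : V) : Set V := {w | G.dir w v}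

/-- The boundary of a vertex: parents and bidirected neighbours. -/
def bd (G : MixedGraph V) (v : V) : Set V := {w | G.dir w v ∨ G.bi w v}

/-- The parents of a set: `pa_G(A) = {w ∉ A : w → v for some v ∈ A}`. -/
def paSet (G : MixedGraph V) (A : Set V) : Set V := {w | w ∉ A ∧ ∃ v ∈ A, G.dir w v}

/-- `Nb_G(A)`: `A` together with all vertices joined to `A` by a bidirected edge. -/
def Nb (G : MixedGraph V) (A : Set V) : Set V := A ∪ {w | ∃ v ∈ A, G.bi w v}

/-- The edge relation of the directed graph `D` of chain components:
`C₁ → C₂` iff they are distinct chain components and some directed edge of `G` joins a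
vertex of `C₁` to a vertex of `C₂`. -/
def compRel (G : MixedGraph V) (C₁ C₂ : Set V) : Prop :=
  G.IsChainComp C₁ ∧ G.IsChainComp C₂ ∧ C₁ ≠ C₂ ∧ ∃ u ∈ C₁, ∃ v ∈ C₂, G.dir u v

/-- `pa_D(T)`: the union of the chain components that are parents of `T` in the directed
graph `D` of chain components. -/
def paD (G : MixedGraph V) (T : Set V) : Set V := {w | G.compRel (G.chainComp w) T}

/-- `nd_D(T)`: the union of the chain components `T'` such that there is no directed path
from `T` to `T'` in the directed graph `D` of chain components. -/
def ndD (G : MixedGraph V) (T : Set V) : Set V :=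
  {w | ¬ Relation.ReflTransGen G.compRel T (G.chainComp w)}

/-- Connectivity in the bidirected part of the induced subgraph on `A`. -/
def biConnIn (G : MixedGraph V) (A : Set V) (u v : V) : Prop :=
  Relation.ReflTransGen (fun a b => a ∈ A ∧ b ∈ A ∧ G.bi a b) u v

/-- `A` is connected: the bidirected part of the induced subgraph on `A` is connected
(and `A` is nonempty). -/
def ConnectedIn (G : MixedGraph V) (A : Set V) : Prop :=
  A.Nonempty ∧ ∀ u ∈ A, ∀ v ∈ A, G.biConnIn A u v

/-- `dis_{G_A}(x)`: the connected component (district) of `x` in the bidirected part of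
the induced subgraph `G_A`. -/
def disIn (G : MixedGraph V) (A : Set V) (x : V) : Set V := {y | G.biConnIn A x y}

/-- The Markov blanket `mb(x, A) = pa_G(dis_{G_A}(x)) ∪ (dis_{G_A}(x) \ {x})`. -/
def mb (G : MixedGraph V) (x : V) (A : Set V) : Set V :=
  G.paSet (G.disIn A x) ∪ (G.disIn A x \ {x})

/-- `pre(T)` relative to an order `r` on chain components: the union of all chain
components strictly preceding `T`. -/
def pre (G : MixedGraph V) (r : Set V → Set V → Prop) (T : Set V) : Set V :=
  {v | r (G.chainComp v) T}

/-- `r` is a strict total order on the chain components of `G` that is consistent with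
the directed graph `D` of chain components, i.e. `pa_D(T) ⊆ pre(T)` for all `T`. -/
def ConsistentCompOrder (G : MixedGraph V) (r : Set V → Set V → Prop) : Prop :=
  (∀ C, ¬ r C C) ∧
  (∀ C₁ C₂ C₃, r C₁ C₂ → r C₂ C₃ → r C₁ C₃) ∧
  (∀ C₁ C₂, G.IsChainComp C₁ → G.IsChainComp C₂ → C₁ = C₂ ∨ r C₁ C₂ ∨ r C₂ C₁) ∧
  (∀ T, G.IsChainComp T → G.paD T ⊆ G.pre r T)

/-- A total order `r` on the vertices of `G` is consistent with `G` if `r x y` implies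
that `y` is not an ancestor of `x`. -/
def ConsistentVertexOrder (G : MixedGraph V) (r : V → V → Prop) : Prop :=
  IsStrictTotalOrder V r ∧ ∀ x y, r x y → ¬ G.anc y x

end MixedGraph

section IndepModel

variable {V : Type u} (I : Set V → Set V → Set V → Prop)

/-- Symmetry: `X ⫫ Y | Z  ⇒  Y ⫫ X | Z`. -/
def IndepSymm : Prop := ∀ X Y Z : Set V, I X Y Z → I Y X Z

/-- Decomposition: `X ⫫ Y ∪ W | Z  ⇒  X ⫫ Y | Z`. -/
def IndepDecomp : Prop := ∀ X Y W Z : Set V, I X (Y ∪ W) Z → I X Y Z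

/-- Weak union: `X ⫫ Y ∪ W | Z  ⇒  X ⫫ Y | Z ∪ W`. -/
def IndepWeakUnion : Prop := ∀ X Y W Z : Set V, I X (Y ∪ W) Z → I X Y (Z ∪ W)

/-- Contraction: `X ⫫ Y | Z ∪ W` and `X ⫫ W | Z` imply `X ⫫ Y ∪ W | Z`. -/
def IndepContraction : Prop := ∀ X Y W Z : Set V, I X Y (Z ∪ W) → I X W Z → I X (Y ∪ W) Z

/-- Composition: `X ⫫ Y | Z` and `X ⫫ W | Z` imply `X ⫫ Y ∪ W | Z`. -/
def IndepComposition : Prop := ∀ X Y W Z : Set V, I X Y Z → I X W Z → I X (Y ∪ W) Z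

/-- A semi-graphoid satisfies symmetry, decomposition, weak union and contraction. -/
def SemiGraphoid : Prop := IndepSymm I ∧ IndepDecomp I ∧ IndepWeakUnion I ∧ IndepContraction I

/-- A compositional semi-graphoid additionally satisfies composition. -/
def CompositionalSemiGraphoid : Prop := SemiGraphoid I ∧ IndepComposition I

variable (G : MixedGraph V)

/-- The global Markov property via m-separation: whenever `X` and `Y` are m-separated
given `Z` in `G` (for pairwise disjoint `X, Y, Z` with `X, Y` nonempty), `⟨X, Y | Z⟩ ∈ ℐ`. -/
def GlobalMarkovM : Prop :=
  ∀ X Y Z : Set V, X.Nonempty → Y.Nonempty →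
    Disjoint X Y → Disjoint X Z → Disjoint Y Z → G.MSep X Y Z → I X Y Z

/-- The global Markov property via augmented-graph separation: whenever `Z` separates `X`
from `Y` in the augmented graph of the induced subgraph of `G` on `an(X ∪ Y ∪ Z)` (for
pairwise disjoint `X, Y, Z` with `X, Y` nonempty), `⟨X, Y | Z⟩ ∈ ℐ`. -/
def GlobalMarkovAug : Prop :=
  ∀ X Y Z : Set V, X.Nonempty → Y.Nonempty →
    Disjoint X Y → Disjoint X Z → Disjoint Y Z → G.AugSep X Y Z → I X Y Z

/-- The block-recursive Markov property of type IV. -/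
def TypeIVMarkov : Prop :=
  ∀ T : Set V, G.IsChainComp T →
    (I T (G.ndD T \ G.paD T) (G.paD T)) ∧
    (∀ A : Set V, A ⊆ T → I A (G.paD T \ G.paSet A) (G.paSet A)) ∧
    (∀ A : Set V, A ⊆ T → G.ConnectedIn A → I A (T \ G.Nb A) (G.paD T))

/-- The multivariate regression (MR) Markov property with respect to the order `r` on the
chain components: (MR1) for connected `A ⊆ T`, `A ⫫ pre(T) \ pa_G(A) | pa_G(A)`; (MR2)
distinct connected components `A₁, A₂` of `A ⊆ T` satisfy `A₁ ⫫ A₂ | pre(T)`. -/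
def MRMarkov (r : Set V → Set V → Prop) : Prop :=
  ∀ T : Set V, G.IsChainComp T → ∀ A : Set V, A ⊆ T →
    (G.ConnectedIn A → I A (G.pre r T \ G.paSet A) (G.paSet A)) ∧
    (∀ x ∈ A, ∀ y ∈ A, G.disIn A x ≠ G.disIn A y →
      I (G.disIn A x) (G.disIn A y) (G.pre r T))

/-- The ordered local Markov property with respect to a total vertex order `r` : for every
vertex `x` and every ancestrally closed `A` with `x ∈ A ⊆ pre_{G,≺}(x)`,
`{x} ⫫ A \ (mb(x,A) ∪ {x}) | mb(x,A)`. -/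
def OrderedLocalMarkov (r : V → V → Prop) : Prop :=
  ∀ (x : V) (A : Set V), G.ancSet A = A → x ∈ A → A ⊆ {v | r v x ∨ v = x} →
    I {x} (A \ (G.mb x A ∪ {x})) (G.mb x A)

/-- The alternative local Markov property: for every vertex `v`,
`{v} ⫫ nd(v) \ bd(v) | pa_G(v)`. -/
def AltLocalMarkov : Prop :=
  ∀ v : V, I {v} (G.nd v \ G.bd v) (G.pa v)

end IndepModel

private lemma suffix_chain {V : Type u} {r : V → V → Prop} :
    ∀ (l : List V) (a x : V), List.Chain r a l → x ∈ a :: l →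
    ∃ t, List.Chain r x t ∧
      (x :: t).getLast (List.cons_ne_nil _ _) = (a :: l).getLast (List.cons_ne_nil _ _) ∧
      List.Sublist (x :: t) (a :: l) := by
  intro l
  induction l with
  | nil =>
    intro a x _ hx
    simp only [List.mem_singleton] at hx
    subst hx
    exact ⟨[], List.Chain.nil, rfl, List.Sublist.refl _⟩
  | cons c l ih =>
    intro a x hchain hx
    rcases List.mem_cons.1 hx with hx | hx
    · subst hx
      exact ⟨c :: l, hchain, rfl, List.Sublist.refl _⟩
    · rcases List.chain_cons.1 hchain with ⟨_, hcl⟩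
      obtain ⟨t, ht, hlast, hsub⟩ := ih c x hcl hx
      refine ⟨t, ht, ?_, hsub.trans (List.sublist_cons_self _ _)⟩
      rw [hlast, List.getLast_cons (List.cons_ne_nil _ _)]

private lemma nodup_chain {V : Type u} {r : V → V → Prop} :
    ∀ (l : List V) (a : V), List.Chain r a l →
    ∃ t, List.Chain r a t ∧
      (a :: t).getLast (List.cons_ne_nil _ _) = (a :: l).getLast (List.cons_ne_nil _ _) ∧
      (a :: t).Nodup := by
  intro l
  induction l with
  | nil => exact fun a _ => ⟨[], List.Chain.nil, rfl, List.nodup_singleton a⟩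
  | cons c l ih =>
    intro a hchain
    rcases List.chain_cons.1 hchain with ⟨hac, hcl⟩
    obtain ⟨t, ht, hlast, hnd⟩ := ih c hcl
    by_cases hmem : a ∈ c :: t
    · obtain ⟨t', ht', hlast', hsub⟩ := suffix_chain (r := r) t c a ht hmem
      refine ⟨t', ht', ?_, hnd.sublist hsub⟩
      rw [hlast', hlast, List.getLast_cons (List.cons_ne_nil _ _)]
    · refine ⟨c :: t, List.chain_cons.2 ⟨hac, ht⟩, ?_, List.nodup_cons.2 ⟨hmem, hnd⟩⟩
      rw [List.getLast_cons (List.cons_ne_nil _ _), hlast,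
        List.getLast_cons (List.cons_ne_nil _ _)]


/-- Every MVR chain graph is an ancestral graph: if `α` and `β` are
joined by an edge with an arrowhead at `α` (i.e. `α ↔ β` or `β → α` is an edge of `G`),
then `α` is not an ancestor of `β`. -/
theorem mvr_is_ancestral {V : Type u} (G : MixedGraph V) (hG : G.IsMVR) (α β : V)
    (h : G.bi α β ∨ G.dir β α) : ¬ G.anc α β := by
  obtain ⟨hmixed, hnc⟩ := hG
  obtain ⟨hbisymm, hbirr, hdirr, -, -⟩ := hmixed
  intro hanc
  have hne : α ≠ β := by
    rintro rfl
    rcases h with h | h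
    · exact hbirr α h
    · exact hdirr α h
  obtain ⟨l, hchain, hlast⟩ := List.exists_isChain_cons_of_relationReflTransGen hanc
  obtain ⟨t, ht, hlast', hnd⟩ := nodup_chain l α hchain
  rw [hlast] at hlast'
  set vs : List V := α :: t with hvs
  have hch : List.Chain' G.dir vs := ht
  have hn2 : 2 ≤ vs.length := by
    rcases t with _ | ⟨c, t'⟩
    · exact absurd hlast' hne
    · simp [hvs]
  set n : ℕ := vs.length with hn
  set f : ℕ → V := fun i => vs.getD (i % n) α with hf
  have hfget : ∀ i (hi : i < n), f i = vs.get ⟨i, hi⟩ := by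
    intro i hi
    simp only [hf, Nat.mod_eq_of_lt hi]
    exact List.getD_eq_getElem vs α hi
  apply hnc
  have hstep : ∀ i, i < n - 1 → G.dir (f i) (f (i + 1)) := by
    intro i hi
    rw [hfget i (by omega), hfget (i + 1) (by omega)]
    exact List.isChain_iff_getElem.1 hch i (by omega)
  have hclose : G.dir (f (n - 1)) (f ((n - 1) + 1)) ∨ G.bi (f (n - 1)) (f ((n - 1) + 1)) := by
    have h1 : f (n - 1) = β := by
      rw [hfget (n - 1) (by omega), ← hlast']
      exact (List.getLast_eq_getElem _).symm
    have h2 : f ((n - 1) + 1) = α := by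
      have : (n - 1) + 1 = n := by omega
      rw [this]
      simp [hf, Nat.mod_self, hvs]
    rw [h1, h2]
    rcases h with h | h
    · exact Or.inr (hbisymm _ _ h)
    · exact Or.inl h
  refine ⟨n, f, hn2, ?_, ?_, ?_, ⟨0, by omega, ?_⟩⟩
  · simp [hf, Nat.mod_self, Nat.zero_mod]
  · intro i j hi hj hij
    rw [hfget i hi, hfget j hj] at hij
    exact congrArg Fin.val (hnd.get_inj_iff.mp hij)
  · intro i hi
    rcases Nat.lt_or_ge i (n - 1) with h' | h'
    · exact Or.inl (hstep i h')
    · have hin : i = n - 1 := by omega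
      rw [hin]
      exact hclose
  · exact hstep 0 (by omega)
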